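/- Let 0 < ε < 1/(25n²), let λ₁,…,λ_k ∈ ℝⁿ be orthonormal and γ₁,…,γ_k ∈ ℝⁿ be unit vectors with ⟨λᵢ, γᵢ⟩ ≥ 1 - ε for all i. Then the spans Λ_k of the λᵢ and Γ_k of the γᵢ have the same dimension k, and d(Λ_k, Γ_k) ≤ 6k²·ε^{1/4}. -/

import Mathlib

open Module

variable {n : ℕ}

local notation "E" => EuclideanSpace ℝ (Fin n)

lemma aux_norm_sq (x : EuclideanSpace ℝ (Fin n)) : ‖x‖ ^ 2 = ∑ i, (x i) ^ 2 := by
  rw [EuclideanSpace.norm_eq, Real.sq_sqrt (by positivity)]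
  simp [Real.norm_eq_abs, sq_abs]

lemma aux_proj_coe {V : Submodule ℝ (EuclideanSpace ℝ (Fin n))} {ι : Type*} [Fintype ι]
    (u : OrthonormalBasis ι ℝ V) (x : EuclideanSpace ℝ (Fin n)) :
    ((V.orthogonalProjection x : E)) = ∑ i, (inner ℝ (u i : E) x : ℝ) • (u i : E) := by
  rw [u.orthogonalProjectionOnto_apply_eq_sum]
  push_cast
  rfl

lemma aux_parseval {V : Submodule ℝ (EuclideanSpace ℝ (Fin n))} {ι : Type*} [Fintype ι]
    (u : OrthonormalBasis ι ℝ V) (x : EuclideanSpace ℝ (Fin n)) :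
    ∑ i, (inner ℝ (u i : E) x : ℝ) ^ 2 = ‖(V.orthogonalProjection x : E)‖ ^ 2 := by
  have h1 : ∀ i, (inner ℝ (u i : E) x : ℝ) = inner ℝ (u i) (V.orthogonalProjection x) :=
    fun i => (Submodule.inner_orthogonalProjectionOnto_eq_of_mem_left (u i) x).symm
  calc ∑ i, (inner ℝ (u i : E) x : ℝ) ^ 2
      = ∑ i, (inner ℝ (V.orthogonalProjection x) (u i) : ℝ)
          * (inner ℝ (u i) (V.orthogonalProjection x) : ℝ) := by
        refine Finset.sum_congr rfl fun i _ => ?_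
        rw [h1 i, real_inner_comm ((V.orthogonalProjection) x) (u i)]; ring
    _ = inner ℝ (V.orthogonalProjection x) (V.orthogonalProjection x) :=
        u.sum_inner_mul_inner _ _
    _ = ‖(V.orthogonalProjection x : E)‖ ^ 2 := by
        rw [real_inner_self_eq_norm_sq]; norm_cast

lemma aux_cross {V W : Submodule ℝ (EuclideanSpace ℝ (Fin n))} {ι κ : Type*} [Fintype ι]
    [Fintype κ] (u : OrthonormalBasis ι ℝ V) (w : OrthonormalBasis κ ℝ W) :
    ∑ j, (inner ℝ (V.orthogonalProjection (EuclideanSpace.basisFun (Fin n) ℝ j) : E)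
        (W.orthogonalProjection (EuclideanSpace.basisFun (Fin n) ℝ j) : E) : ℝ)
      = ∑ i, ∑ l, (inner ℝ (u i : E) (w l : E) : ℝ) ^ 2 := by
  have key : ∀ j, (inner ℝ (V.orthogonalProjection (EuclideanSpace.basisFun (Fin n) ℝ j) : E)
      (W.orthogonalProjection (EuclideanSpace.basisFun (Fin n) ℝ j) : E) : ℝ)
      = ∑ i, ∑ l, ((inner ℝ (u i : E) (EuclideanSpace.basisFun (Fin n) ℝ j) : ℝ)
          * (inner ℝ (w l : E) (EuclideanSpace.basisFun (Fin n) ℝ j) : ℝ))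
          * (inner ℝ (u i : E) (w l : E) : ℝ) := by
    intro j
    rw [aux_proj_coe u, aux_proj_coe w, sum_inner]
    refine Finset.sum_congr rfl fun i _ => ?_
    rw [real_inner_smul_left, inner_sum]
    rw [Finset.mul_sum]
    refine Finset.sum_congr rfl fun l _ => ?_
    rw [real_inner_smul_right]
    ring
  rw [Finset.sum_congr rfl fun j _ => key j]
  rw [Finset.sum_comm]
  refine Finset.sum_congr rfl fun i _ => ?_
  rw [Finset.sum_comm]
  refine Finset.sum_congr rfl fun l _ => ?_
  rw [← Finset.sum_mul]
  have : ∑ j, (inner ℝ (u i : E) (EuclideanSpace.basisFun (Fin n) ℝ j) : ℝ)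
      * (inner ℝ (w l : E) (EuclideanSpace.basisFun (Fin n) ℝ j) : ℝ)
      = (inner ℝ (u i : E) (w l : E) : ℝ) := by
    have h := (EuclideanSpace.basisFun (Fin n) ℝ).sum_inner_mul_inner (u i : E) (w l : E)
    rw [← h]
    refine Finset.sum_congr rfl fun j _ => ?_
    rw [real_inner_comm ((w l : E)) _]
  rw [this]; ring

lemma exists_onb {k : ℕ} (v : Fin k → EuclideanSpace ℝ (Fin n)) (hv : Orthonormal ℝ v) :
    ∃ u : OrthonormalBasis (Fin k) ℝ (Submodule.span ℝ (Set.range v)),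
      ∀ i, (u i : E) = v i := by
  classical
  have hset : Submodule.span ℝ ((Finset.univ.image v : Finset _) : Set (EuclideanSpace ℝ (Fin n)))
      = Submodule.span ℝ (Set.range v) := by
    congr 1
    simp
  let b := OrthonormalBasis.span (𝕜 := ℝ) hv Finset.univ
  let φ := LinearIsometryEquiv.ofEq _ _ hset
  let e : ((Finset.univ : Finset (Fin k)) : Type) ≃ Fin k :=
    Equiv.subtypeUnivEquiv (fun i => Finset.mem_univ i)
  refine ⟨((b.map φ).reindex e), fun i => ?_⟩
  simp only [OrthonormalBasis.reindex_apply, OrthonormalBasis.map_apply, φ,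
    LinearIsometryEquiv.coe_ofEq_apply, b]
  rw [OrthonormalBasis.span_apply]
  congr 1


/-- The matrix (in the standard basis) of the orthogonal projection onto a subspace of `ℝⁿ`. -/
noncomputable def projMatrix (V : Submodule ℝ (EuclideanSpace ℝ (Fin n))) :
    Matrix (Fin n) (Fin n) ℝ :=
  LinearMap.toMatrix (EuclideanSpace.basisFun (Fin n) ℝ).toBasis
    (EuclideanSpace.basisFun (Fin n) ℝ).toBasis
    (V.subtype ∘ₗ (V.orthogonalProjection).toLinearMap)

/-- Frobenius norm of a square real matrix. -/
noncomputable def frobNorm (A : Matrix (Fin n) (Fin n) ℝ) : ℝ :=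
  Real.sqrt (∑ i, ∑ j, (A i j) ^ 2)

/-- Subspace distance: Frobenius norm of the difference of orthogonal projections. -/
noncomputable def subspaceDist (V W : Submodule ℝ (EuclideanSpace ℝ (Fin n))) : ℝ :=
  frobNorm (projMatrix V - projMatrix W)

lemma projMatrix_apply (V : Submodule ℝ (EuclideanSpace ℝ (Fin n))) (i j : Fin n) :
    projMatrix V i j
      = (V.orthogonalProjection (EuclideanSpace.basisFun (Fin n) ℝ j) : E) i := by
  rw [projMatrix, LinearMap.toMatrix_apply]
  simp


set_option maxHeartbeats 1000000 in
/-- If `λ₁,…,λ_k` are orthonormal, `γ₁,…,γ_k` are unit vectors with `⟨λᵢ,γᵢ⟩ ≥ 1-ε` and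
`0 < ε < 1/(25n²)`, then the spans `Λ_k`, `Γ_k` have the same dimension `k` and
`d(Λ_k, Γ_k) ≤ 6k²·ε^{1/4}`. -/
theorem span_perturbation (k : ℕ) (ε : ℝ) (hε : 0 < ε) (hε' : ε < 1 / (25 * (n : ℝ) ^ 2))
    (lam gam : Fin k → EuclideanSpace ℝ (Fin n))
    (hlam : Orthonormal ℝ lam)
    (hgam : ∀ i, ‖gam i‖ = 1)
    (hclose : ∀ i, (inner ℝ (lam i) (gam i) : ℝ) ≥ 1 - ε) :
    finrank ℝ (Submodule.span ℝ (Set.range gam)) = k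
    ∧ subspaceDist (Submodule.span ℝ (Set.range lam)) (Submodule.span ℝ (Set.range gam))
        ≤ 6 * (k : ℝ) ^ 2 * ε ^ ((1 : ℝ) / 4) := by
  classical
  have hn : 0 < n := by
    rcases Nat.eq_zero_or_pos n with h | h
    · subst h; norm_num at hε'; linarith
    · exact h
  have hn1 : (1 : ℝ) ≤ n := by exact_mod_cast hn
  have hkn : (k : ℝ) ≤ n := by
    have := hlam.linearIndependent.fintype_card_le_finrank
    rw [finrank_euclideanSpace_fin, Fintype.card_fin] at this
    exact_mod_cast this
  have hε1 : ε < 1 / 25 := by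
    have h25 : (25 : ℝ) ≤ 25 * (n : ℝ) ^ 2 := by nlinarith
    have : 1 / (25 * (n : ℝ) ^ 2) ≤ 1 / 25 := by
      apply one_div_le_one_div_of_le <;> nlinarith
    linarith
  have hkε : 2 * (k : ℝ) * ε < 1 := by
    have h1 : (k : ℝ) * ε ≤ (n : ℝ) * ε := by nlinarith
    have h2 : (n : ℝ) * ε < (n : ℝ) * (1 / (25 * (n : ℝ) ^ 2)) := by
      apply mul_lt_mul_of_pos_left hε' (by linarith)
    have h3 : (n : ℝ) * (1 / (25 * (n : ℝ) ^ 2)) = 1 / (25 * n) := by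
      field_simp
    have h4 : 1 / (25 * (n : ℝ)) ≤ 1 / 25 := by
      apply one_div_le_one_div_of_le <;> nlinarith
    nlinarith
  -- distance of each pair
  have hd : ∀ i, ‖lam i - gam i‖ ^ 2 ≤ 2 * ε := by
    intro i
    rw [norm_sub_sq_real, hlam.1 i, hgam i]
    simp only [one_pow]
    linarith [hclose i]
  -- linear independence of gam
  have hgli : LinearIndependent ℝ gam := by
    rw [Fintype.linearIndependent_iff]
    intro g hg i
    have hsum : ∑ j, g j • lam j = ∑ j, g j • (lam j - gam j) := by
      simp only [smul_sub, Finset.sum_sub_distrib, hg, sub_zero]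
    have hA : ‖∑ j, g j • lam j‖ ^ 2 = ∑ j, g j ^ 2 := by
      rw [← real_inner_self_eq_norm_sq, hlam.inner_sum g g Finset.univ]
      simp [sq]
    have hB : ‖∑ j, g j • (lam j - gam j)‖ ≤ ∑ j, |g j| * ‖lam j - gam j‖ := by
      refine (norm_sum_le _ _).trans_eq ?_
      refine Finset.sum_congr rfl fun j _ => ?_
      rw [norm_smul, Real.norm_eq_abs]
    have hCS : (∑ j, |g j| * ‖lam j - gam j‖) ^ 2
        ≤ (∑ j, g j ^ 2) * ∑ j, ‖lam j - gam j‖ ^ 2 := by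
      have := Finset.sum_mul_sq_le_sq_mul_sq Finset.univ (fun j => |g j|)
        (fun j => ‖lam j - gam j‖)
      simpa [sq_abs] using this
    have hsmall : ∑ j, ‖lam j - gam j‖ ^ 2 ≤ (k : ℝ) * (2 * ε) := by
      calc ∑ j, ‖lam j - gam j‖ ^ 2 ≤ ∑ _j : Fin k, 2 * ε :=
            Finset.sum_le_sum fun j _ => hd j
        _ = (k : ℝ) * (2 * ε) := by simp [mul_comm]
    have hnn : (0 : ℝ) ≤ ∑ j, g j ^ 2 := Finset.sum_nonneg fun j _ => sq_nonneg _
    have hBnn : (0 : ℝ) ≤ ∑ j, |g j| * ‖lam j - gam j‖ :=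
      Finset.sum_nonneg fun j _ => mul_nonneg (abs_nonneg _) (norm_nonneg _)
    have hkey : ∑ j, g j ^ 2 ≤ (∑ j, g j ^ 2) * ((k : ℝ) * (2 * ε)) := by
      have h5 : ‖∑ j, g j • lam j‖ ^ 2 ≤ (∑ j, |g j| * ‖lam j - gam j‖) ^ 2 := by
        rw [hsum]
        exact pow_le_pow_left₀ (norm_nonneg _) hB 2
      nlinarith
    have hzero : ∑ j, g j ^ 2 = 0 := by nlinarith
    have := (Finset.sum_eq_zero_iff_of_nonneg (fun j _ => sq_nonneg (g j))).mp hzero i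
      (Finset.mem_univ i)
    exact pow_eq_zero_iff (by norm_num) |>.mp this
  have hrank : finrank ℝ (Submodule.span ℝ (Set.range gam)) = k := by
    rw [finrank_span_eq_card hgli, Fintype.card_fin]
  refine ⟨hrank, ?_⟩
  set Λ := Submodule.span ℝ (Set.range lam) with hΛ
  set Γ := Submodule.span ℝ (Set.range gam) with hΓ
  obtain ⟨u, hu⟩ := exists_onb lam hlam
  let w : OrthonormalBasis (Fin (finrank ℝ Γ)) ℝ Γ := stdOrthonormalBasis ℝ Γ
  have hPP : ∑ j, (inner ℝ (Λ.orthogonalProjection (EuclideanSpace.basisFun (Fin n) ℝ j) : E)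
      (Λ.orthogonalProjection (EuclideanSpace.basisFun (Fin n) ℝ j) : E) : ℝ) = (k : ℝ) := by
    rw [aux_cross u u]
    have h9 : ∀ i l, (inner ℝ (u i : E) (u l : E) : ℝ) ^ 2 = if i = l then 1 else 0 := by
      intro i l
      rw [hu i, hu l, orthonormal_iff_ite.mp hlam]
      by_cases h : i = l <;> simp [h]
    calc ∑ i, ∑ l, (inner ℝ (u i : E) (u l : E) : ℝ) ^ 2
        = ∑ i : Fin k, (1 : ℝ) := by
          refine Finset.sum_congr rfl fun i _ => ?_
          rw [Finset.sum_congr rfl fun l _ => h9 i l, Finset.sum_ite_eq]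
          simp
      _ = (k : ℝ) := by simp
  have hQQ : ∑ j, (inner ℝ (Γ.orthogonalProjection (EuclideanSpace.basisFun (Fin n) ℝ j) : E)
      (Γ.orthogonalProjection (EuclideanSpace.basisFun (Fin n) ℝ j) : E) : ℝ) = (k : ℝ) := by
    rw [aux_cross w w]
    have h9 : ∀ i l, (inner ℝ (w i : E) (w l : E) : ℝ) ^ 2 = if i = l then 1 else 0 := by
      intro i l
      have h10 := orthonormal_iff_ite.mp w.orthonormal i l
      rw [← Submodule.coe_inner, h10]
      by_cases h : i = l <;> simp [h]
    calc ∑ i, ∑ l, (inner ℝ (w i : E) (w l : E) : ℝ) ^ 2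
        = ∑ _i : Fin (finrank ℝ Γ), (1 : ℝ) := by
          refine Finset.sum_congr rfl fun i _ => ?_
          rw [Finset.sum_congr rfl fun l _ => h9 i l, Finset.sum_ite_eq]
          simp
      _ = (k : ℝ) := by simp [hrank]
  have hPQ : ∑ j, (inner ℝ (Λ.orthogonalProjection (EuclideanSpace.basisFun (Fin n) ℝ j) : E)
      (Γ.orthogonalProjection (EuclideanSpace.basisFun (Fin n) ℝ j) : E) : ℝ)
      = ∑ i, ‖(Γ.orthogonalProjection (lam i) : E)‖ ^ 2 := by
    rw [aux_cross u w]
    refine Finset.sum_congr rfl fun i _ => ?_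
    rw [← aux_parseval w (lam i)]
    refine Finset.sum_congr rfl fun l _ => ?_
    rw [hu i, real_inner_comm]
  -- per-vector bound
  have hproj : ∀ i, 1 - ‖(Γ.orthogonalProjection (lam i) : E)‖ ^ 2 ≤ 2 * ε := by
    intro i
    set y : EuclideanSpace ℝ (Fin n) := (Γ.orthogonalProjection (lam i) : E) with hy
    have hyΓ : y ∈ Γ := Submodule.coe_mem _
    have e1 : (inner ℝ (lam i - y) y : ℝ) = 0 :=
      Submodule.starProjection_inner_eq_zero (K := Γ) (lam i) y hyΓ
    have e2 : ‖lam i - y‖ ^ 2 = ‖lam i‖ ^ 2 - 2 * inner ℝ (lam i) y + ‖y‖ ^ 2 :=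
      norm_sub_sq_real _ _
    have e3 : (inner ℝ (lam i) y : ℝ) = ‖y‖ ^ 2 := by
      rw [inner_sub_left] at e1
      have := real_inner_self_eq_norm_sq y
      linarith
    have e4 : ‖lam i - y‖ ^ 2 = 1 - ‖y‖ ^ 2 := by
      rw [e2, hlam.1 i, e3]; ring
    have hgΓ : gam i ∈ Γ := Submodule.subset_span (Set.mem_range_self i)
    have e5 : (inner ℝ (lam i - y) (y - gam i) : ℝ) = 0 :=
      Submodule.starProjection_inner_eq_zero (K := Γ) (lam i) (y - gam i) (Submodule.sub_mem Γ hyΓ hgΓ)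
    have e6 : ‖lam i - gam i‖ ^ 2 = ‖lam i - y‖ ^ 2 + ‖y - gam i‖ ^ 2 := by
      have h11 : lam i - gam i = (lam i - y) + (y - gam i) := by abel
      rw [h11, norm_add_sq_real, e5]
      ring
    have := hd i
    nlinarith [sq_nonneg ‖y - gam i‖]
  have hsumproj : (k : ℝ) - ∑ i, ‖(Γ.orthogonalProjection (lam i) : E)‖ ^ 2
      ≤ (k : ℝ) * (2 * ε) := by
    have h12 : ∑ i : Fin k, (1 - ‖(Γ.orthogonalProjection (lam i) : E)‖ ^ 2)
        ≤ ∑ _i : Fin k, 2 * ε := Finset.sum_le_sum fun i _ => hproj i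
    simpa [Finset.sum_sub_distrib, mul_comm] using h12
  -- the squared distance
  have hS : ∑ j, ‖(Λ.orthogonalProjection (EuclideanSpace.basisFun (Fin n) ℝ j) : E)
      - (Γ.orthogonalProjection (EuclideanSpace.basisFun (Fin n) ℝ j) : E)‖ ^ 2
      ≤ 4 * (k : ℝ) * ε := by
    have hexp : ∀ j : Fin n, ‖(Λ.orthogonalProjection (EuclideanSpace.basisFun (Fin n) ℝ j) : E)
        - (Γ.orthogonalProjection (EuclideanSpace.basisFun (Fin n) ℝ j) : E)‖ ^ 2
        = (inner ℝ (Λ.orthogonalProjection (EuclideanSpace.basisFun (Fin n) ℝ j) : E)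
            (Λ.orthogonalProjection (EuclideanSpace.basisFun (Fin n) ℝ j) : E) : ℝ)
          - 2 * (inner ℝ (Λ.orthogonalProjection (EuclideanSpace.basisFun (Fin n) ℝ j) : E)
            (Γ.orthogonalProjection (EuclideanSpace.basisFun (Fin n) ℝ j) : E) : ℝ)
          + (inner ℝ (Γ.orthogonalProjection (EuclideanSpace.basisFun (Fin n) ℝ j) : E)
            (Γ.orthogonalProjection (EuclideanSpace.basisFun (Fin n) ℝ j) : E) : ℝ) := by
      intro j
      rw [norm_sub_sq_real, real_inner_self_eq_norm_sq, real_inner_self_eq_norm_sq]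
    rw [Finset.sum_congr rfl fun j _ => hexp j, Finset.sum_add_distrib,
      Finset.sum_sub_distrib, ← Finset.mul_sum, hPP, hQQ, hPQ]
    linarith
  -- identify subspaceDist with the sum
  have hdist : subspaceDist Λ Γ
      = Real.sqrt (∑ j, ‖(Λ.orthogonalProjection (EuclideanSpace.basisFun (Fin n) ℝ j) : E)
        - (Γ.orthogonalProjection (EuclideanSpace.basisFun (Fin n) ℝ j) : E)‖ ^ 2) := by
    rw [subspaceDist, frobNorm]
    congr 1
    rw [Finset.sum_comm]
    refine Finset.sum_congr rfl fun j _ => ?_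
    rw [aux_norm_sq]
    refine Finset.sum_congr rfl fun i _ => ?_
    simp only [Matrix.sub_apply, projMatrix_apply]
    rfl
  have hdist' : subspaceDist Λ Γ ≤ Real.sqrt (4 * (k : ℝ) * ε) := by
    rw [hdist]; exact Real.sqrt_le_sqrt hS
  -- final numeric bound
  have hrpow : (ε ^ ((1 : ℝ) / 4)) ^ 2 = ε ^ ((1 : ℝ) / 2) := by
    rw [← Real.rpow_natCast (ε ^ ((1 : ℝ) / 4)) 2, ← Real.rpow_mul hε.le]
    norm_num
  have hεle : ε ≤ ε ^ ((1 : ℝ) / 2) := by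
    nth_rewrite 1 [← Real.rpow_one ε]
    exact Real.rpow_le_rpow_of_exponent_ge hε (by linarith) (by norm_num)
  have hfinal : Real.sqrt (4 * (k : ℝ) * ε) ≤ 6 * (k : ℝ) ^ 2 * ε ^ ((1 : ℝ) / 4) := by
    have hrpos : (0 : ℝ) ≤ ε ^ ((1 : ℝ) / 4) := Real.rpow_nonneg hε.le _
    have h6 : 4 * (k : ℝ) * ε ≤ (6 * (k : ℝ) ^ 2 * ε ^ ((1 : ℝ) / 4)) ^ 2 := by
      have hexpand : (6 * (k : ℝ) ^ 2 * ε ^ ((1 : ℝ) / 4)) ^ 2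
          = 36 * (k : ℝ) ^ 4 * ε ^ ((1 : ℝ) / 2) := by
        rw [mul_pow, mul_pow, hrpow]; ring
      rw [hexpand]
      rcases Nat.eq_zero_or_pos k with hk | hk
      · subst hk; simp
      · have hk1 : (1 : ℝ) ≤ k := by exact_mod_cast hk
        have h7 : 4 * (k : ℝ) * ε ≤ 4 * (k : ℝ) * ε ^ ((1 : ℝ) / 2) := by nlinarith
        have h8 : 4 * (k : ℝ) * ε ^ ((1 : ℝ) / 2) ≤ 36 * (k : ℝ) ^ 4 * ε ^ ((1 : ℝ) / 2) := by
          have hr2 : (0 : ℝ) ≤ ε ^ ((1 : ℝ) / 2) := Real.rpow_nonneg hε.le _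
          have h9' : (k : ℝ) ≤ (k : ℝ) ^ 4 := by nlinarith [sq_nonneg ((k:ℝ)^2 - 1), sq_nonneg ((k:ℝ) - 1), sq_nonneg ((k:ℝ)^2 - (k:ℝ))]
          nlinarith [mul_le_mul_of_nonneg_right h9' hr2]
        linarith
    calc Real.sqrt (4 * (k : ℝ) * ε) ≤ Real.sqrt ((6 * (k : ℝ) ^ 2 * ε ^ ((1 : ℝ) / 4)) ^ 2) :=
          Real.sqrt_le_sqrt h6
      _ = 6 * (k : ℝ) ^ 2 * ε ^ ((1 : ℝ) / 4) := Real.sqrt_sq (by positivity)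
  linarith
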